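/- arXiv:1603.05041 — 7 statements merged into one kernel-verified Lean document; each statement's English description precedes it below -/
import Mathlib

section
/- For every real x and nonnegative integer n and real α, lim_{a→1} (a-1)^n m_n^{a, α+1}(x/(1-a)) = L_n^{α}(x), where the limit is taken over a ≠ 1. -/
open Filter Topology Finset

/-- Generalized binomial coefficient C(y, k) = y(y-1)⋯(y-k+1)/k!. -/
noncomputable def gbinom (y : ℝ) (k : ℕ) : ℝ :=
  (∏ i ∈ Finset.range k, (y - i)) / (Nat.factorial k)

/-- Pochhammer symbol (y)_k = y(y+1)⋯(y+k-1). -/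
noncomputable def poch (y : ℝ) (k : ℕ) : ℝ :=
  ∏ i ∈ Finset.range k, (y + i)

/-- Laguerre polynomial L_n^α(x). -/
noncomputable def laguerre (n : ℕ) (α x : ℝ) : ℝ :=
  ∑ j ∈ Finset.range (n + 1), ((-x) ^ j / (Nat.factorial j)) * gbinom ((n : ℝ) + α) (n - j)

/-- Meixner polynomial m_n^{a,c}(x). -/
noncomputable def meixner (n : ℕ) (a c x : ℝ) : ℝ :=
  (a ^ n / (1 - a) ^ n) *
    ∑ j ∈ Finset.range (n + 1), (a⁻¹) ^ j * gbinom x j * gbinom (-x - c) (n - j)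

lemma descPoch_smeval_prod (y : ℝ) (k : ℕ) :
    (descPochhammer ℤ k).smeval y = ∏ i ∈ Finset.range k, (y - i) := by
  induction k with
  | zero => simp [descPochhammer_zero, Polynomial.smeval_one]
  | succ k ih =>
      rw [descPochhammer_succ_right, Polynomial.smeval_mul, ih, Finset.prod_range_succ,
        Polynomial.smeval_sub, Polynomial.smeval_X, Polynomial.smeval_natCast]
      simp

lemma gbinom_eq_choose (y : ℝ) (k : ℕ) : gbinom y k = Ring.choose y k := by
  have h := Ring.descPochhammer_eq_factorial_smul_choose y k
  rw [descPoch_smeval_prod, nsmul_eq_mul] at h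
  have hf : ((Nat.factorial k : ℕ) : ℝ) ≠ 0 := by exact_mod_cast Nat.factorial_ne_zero k
  rw [gbinom, h]
  field_simp

lemma gbinom_add (u v : ℝ) (m : ℕ) :
    gbinom (u + v) m = ∑ i ∈ Finset.range (m + 1), gbinom u i * gbinom v (m - i) := by
  simp only [gbinom_eq_choose]
  rw [Ring.add_choose_eq m (Commute.all u v),
    Finset.Nat.sum_antidiagonal_eq_sum_range_succ_mk]

lemma gbinom_tri (y : ℝ) {k j : ℕ} (h : k ≤ j) :
    (j.choose k : ℝ) * gbinom y j = gbinom y k * gbinom (y - k) (j - k) := by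
  simp only [gbinom_eq_choose]
  have := Ring.choose_smul_choose y h
  rwa [nsmul_eq_mul] at this

lemma key (n : ℕ) (a y c : ℝ) :
    ∑ j ∈ Finset.range (n + 1), (a⁻¹) ^ j * gbinom y j * gbinom (-y - c) (n - j)
      = ∑ k ∈ Finset.range (n + 1),
          (a⁻¹ - 1) ^ k * gbinom y k * gbinom (-c - k) (n - k) := by
  have hexp : ∀ j : ℕ, (a⁻¹) ^ j
      = ∑ k ∈ Finset.range (j + 1), (a⁻¹ - 1) ^ k * (j.choose k : ℝ) := by
    intro j
    have := add_pow (a⁻¹ - 1) 1 j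
    simp only [one_pow, mul_one, sub_add_cancel] at this
    rw [this]
  calc
    ∑ j ∈ Finset.range (n + 1), (a⁻¹) ^ j * gbinom y j * gbinom (-y - c) (n - j)
        = ∑ j ∈ Finset.range (n + 1), ∑ k ∈ Finset.range (j + 1),
            (a⁻¹ - 1) ^ k * ((j.choose k : ℝ) * gbinom y j) * gbinom (-y - c) (n - j) := by
          refine Finset.sum_congr rfl fun j _ => ?_
          rw [hexp j, Finset.sum_mul, Finset.sum_mul]
          refine Finset.sum_congr rfl fun k _ => ?_
          ring
    _ = ∑ k ∈ Finset.range (n + 1), ∑ j ∈ Finset.Ico k (n + 1),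
            (a⁻¹ - 1) ^ k * ((j.choose k : ℝ) * gbinom y j) * gbinom (-y - c) (n - j) := by
          refine Finset.sum_comm' fun j k => ?_
          simp only [Finset.mem_range, Finset.mem_Ico]
          omega
    _ = ∑ k ∈ Finset.range (n + 1),
            (a⁻¹ - 1) ^ k * gbinom y k * gbinom (-c - k) (n - k) := by
          refine Finset.sum_congr rfl fun k hk => ?_
          rw [Finset.mem_range] at hk
          have hkn : k ≤ n := Nat.lt_succ_iff.mp hk
          have step1 : ∀ j ∈ Finset.Ico k (n + 1),
              (a⁻¹ - 1) ^ k * ((j.choose k : ℝ) * gbinom y j) * gbinom (-y - c) (n - j)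
                = (a⁻¹ - 1) ^ k * gbinom y k *
                    (gbinom (y - k) (j - k) * gbinom (-y - c) (n - j)) := by
            intro j hj
            rw [Finset.mem_Ico] at hj
            rw [gbinom_tri y hj.1]
            ring
          rw [Finset.sum_congr rfl step1, ← Finset.mul_sum]
          congr 1
          rw [Finset.sum_Ico_eq_sum_range]
          have harg : (-c - (k : ℝ)) = (y - k) + (-y - c) := by ring
          rw [harg, gbinom_add]
          have hcount : n + 1 - k = n - k + 1 := by omega
          rw [hcount]
          refine Finset.sum_congr rfl fun i hi => ?_
          rw [Finset.mem_range] at hi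
          congr 2
          · omega
          · omega

theorem stmt4 (n : ℕ) (α x : ℝ) :
    Tendsto (fun a : ℝ => (a - 1) ^ n * meixner n a (α + 1) (x / (1 - a)))
      (𝓝[≠] (1 : ℝ)) (𝓝 (laguerre n α x)) := by
  set g : ℝ → ℝ := fun a => ∑ k ∈ Finset.range (n + 1),
    (-1 : ℝ) ^ n * a ^ (n - k) * ((∏ i ∈ Finset.range k, (x - i * (1 - a))) / (Nat.factorial k))
      * gbinom (-(α + 1) - k) (n - k) with hg
  have hgcont : Continuous g := by
    refine continuous_finset_sum _ fun k _ => ?_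
    fun_prop
  have hg1 : g 1 = laguerre n α x := by
    rw [hg]
    simp only [sub_self, mul_zero, sub_zero, one_pow, mul_one]
    unfold laguerre
    refine Finset.sum_congr rfl fun k hk => ?_
    rw [Finset.mem_range] at hk
    have hkn : k ≤ n := Nat.lt_succ_iff.mp hk
    have hsign : gbinom (-(α + 1) - k) (n - k)
        = (-1 : ℝ) ^ (n - k) * gbinom ((n : ℝ) + α) (n - k) := by
      unfold gbinom
      rw [← mul_div_assoc]
      congr 1
      rw [← Finset.prod_range_reflect (fun i => (n : ℝ) + α - i) (n - k)]
      calc ∏ i ∈ Finset.range (n - k), (-(α + 1) - (k : ℝ) - i)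
          = ∏ i ∈ Finset.range (n - k), (-1 : ℝ) * (α + 1 + k + i) := by
            refine Finset.prod_congr rfl fun i _ => ?_; ring
        _ = (-1 : ℝ) ^ (n - k) * ∏ i ∈ Finset.range (n - k), (α + 1 + (k : ℝ) + i) := by
            rw [Finset.prod_mul_distrib, Finset.prod_const, Finset.card_range]
        _ = (-1 : ℝ) ^ (n - k) *
              ∏ i ∈ Finset.range (n - k), ((n : ℝ) + α - (n - k - 1 - i : ℕ)) := by
            congr 1
            refine Finset.prod_congr rfl fun i hi => ?_
            rw [Finset.mem_range] at hi
            have h1 : (↑(n - k - 1 - i) : ℝ) = (n : ℝ) - k - 1 - i := by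
              have hi' : k + 1 + i ≤ n := by omega
              rw [show n - k - 1 - i = n - (k + 1 + i) by omega, Nat.cast_sub hi']
              push_cast
              ring
            rw [h1]; ring
    rw [hsign, Finset.prod_const, Finset.card_range]
    have hpow : (-1 : ℝ) ^ n * ((-1 : ℝ) ^ (n - k)) = (-1 : ℝ) ^ k := by
      rw [← pow_add]
      have : n + (n - k) = k + 2 * (n - k) := by omega
      rw [this, pow_add, pow_mul]
      norm_num
    calc (-1 : ℝ) ^ n * (x ^ k / (Nat.factorial k))
            * ((-1 : ℝ) ^ (n - k) * gbinom ((n : ℝ) + α) (n - k))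
        = ((-1 : ℝ) ^ n * (-1 : ℝ) ^ (n - k)) * (x ^ k / (Nat.factorial k))
            * gbinom ((n : ℝ) + α) (n - k) := by ring
      _ = (-x) ^ k / (Nat.factorial k) * gbinom ((n : ℝ) + α) (n - k) := by
        rw [hpow, neg_pow]
        ring
  have heq : ∀ᶠ a in 𝓝[≠] (1 : ℝ),
      (a - 1) ^ n * meixner n a (α + 1) (x / (1 - a)) = g a := by
    have h0 : ∀ᶠ a in 𝓝[≠] (1 : ℝ), a ≠ 0 := by
      filter_upwards [(eventually_ne_nhds (show (1 : ℝ) ≠ 0 by norm_num)).filter_mono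
        nhdsWithin_le_nhds] with a ha using ha
    filter_upwards [h0, self_mem_nhdsWithin] with a ha0 ha1
    simp only [Set.mem_compl_iff, Set.mem_singleton_iff] at ha1
    have ht : (1 - a) ≠ 0 := fun h => ha1 (by linarith)
    unfold meixner
    rw [key n a (x / (1 - a)) (α + 1)]
    rw [hg, Finset.mul_sum, Finset.mul_sum]
    refine Finset.sum_congr rfl fun k hk => ?_
    rw [Finset.mem_range] at hk
    have hkn : k ≤ n := Nat.lt_succ_iff.mp hk
    have h2 : a⁻¹ - 1 = (1 - a) / a := by field_simp
    have hfact : ((Nat.factorial k : ℕ) : ℝ) ≠ 0 := by exact_mod_cast Nat.factorial_ne_zero k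
    have h3 : gbinom (x / (1 - a)) k
        = (∏ i ∈ Finset.range k, (x - i * (1 - a))) / ((1 - a) ^ k * (Nat.factorial k)) := by
      unfold gbinom
      have hterm : ∀ i : ℕ, x / (1 - a) - i = (x - i * (1 - a)) / (1 - a) := by
        intro i
        field_simp
      rw [Finset.prod_congr rfl fun i _ => hterm i, Finset.prod_div_distrib,
        Finset.prod_const, Finset.card_range, div_div, mul_comm ((1 - a) ^ k) _, mul_comm,
        ← div_div]
    have h4 : (a - 1) ^ n = (-1 : ℝ) ^ n * (1 - a) ^ n := by
      rw [show a - 1 = (-1 : ℝ) * (1 - a) by ring, mul_pow]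
    have h5 : a ^ (n - k) = a ^ n / a ^ k := pow_sub₀ a ha0 hkn
    rw [h2, h3, h4, h5]
    field_simp
    rw [div_pow, div_mul_eq_mul_div, div_mul_eq_mul_div, div_mul_cancel₀ _ (pow_ne_zero k ha0)]
    ring
  have htend : Tendsto g (𝓝[≠] (1 : ℝ)) (𝓝 (laguerre n α x)) := by
    rw [← hg1]
    exact (hgcont.tendsto 1).mono_left nhdsWithin_le_nhds
  exact htend.congr' (heq.mono fun a ha => ha.symm)
end

section
/- Let φ be a real function defined near 1 (for a ≠ 1) with lim_{a→1} φ(a) = α+1. Then for every real x and nonnegative integer n, lim_{a→1} (a-1)^n m_n^{a, φ(a)}(x/(1-a)) = L_n^{α}(x). -/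
open Filter Topology Finset

lemma gbinom_zero (y : ℝ) : gbinom y 0 = 1 := by simp [gbinom]

lemma pascal (y : ℝ) (k : ℕ) : gbinom y (k+1) = gbinom (y-1) k + gbinom (y-1) (k+1) := by
  unfold gbinom
  rw [Finset.prod_range_succ' (fun i => y - i), Finset.prod_range_succ (fun i => (y-1) - i)]
  have h1 : (Nat.factorial (k+1) : ℝ) = (k+1) * Nat.factorial k := by
    push_cast [Nat.factorial_succ]; ring
  have h2 : (Nat.factorial k : ℝ) ≠ 0 := Nat.cast_ne_zero.2 (Nat.factorial_ne_zero k)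
  have h3 : ((k:ℝ)+1) ≠ 0 := by positivity
  have he : ∀ i ∈ Finset.range k, y - ((i:ℝ)+1) = (y-1) - i := by intro i _; ring
  rw [Finset.prod_congr rfl (fun i hi => by push_cast; rw [he i hi])]
  field_simp [h1]
  rw [h1]
  push_cast
  ring

lemma gbinom_nat_zero_pos (i : ℕ) (hi : 0 < i) : gbinom 0 i = 0 := by
  unfold gbinom
  rw [Finset.prod_eq_zero (Finset.mem_range.2 hi)] <;> simp

lemma vandermonde_nat (m : ℕ) (v : ℝ) (u : ℕ) :
    gbinom ((u:ℝ) + v) m = ∑ i ∈ Finset.range (m+1), gbinom u i * gbinom v (m - i) := by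
  induction u generalizing m with
  | zero =>
    rw [Finset.sum_eq_single 0]
    · simp [gbinom_zero]
    · intro i hi hne
      rw [show ((0:ℕ):ℝ) = (0:ℝ) by norm_num, gbinom_nat_zero_pos i (Nat.pos_of_ne_zero hne),
        zero_mul]
    · simp
  | succ u ih =>
    cases m with
    | zero => simp [gbinom_zero]
    | succ m =>
      have hy : ((u:ℝ)+1) + v - 1 = (u:ℝ) + v := by ring
      rw [show (((u+1:ℕ)):ℝ) = (u:ℝ)+1 by push_cast; ring, pascal, hy, ih m, ih (m+1)]
      rw [Finset.sum_range_succ' (fun i => gbinom ((u:ℝ)+1) i * gbinom v (m + 1 - i)),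
          Finset.sum_range_succ' (fun i => gbinom (u:ℝ) i * gbinom v (m + 1 - i))]
      have hp : ∀ i : ℕ, gbinom ((u:ℝ)+1) (i+1) = gbinom u i + gbinom u (i+1) := by
        intro i; rw [pascal]; norm_num
      simp only [hp, add_mul, Finset.sum_add_distrib, gbinom_zero,
        Nat.add_comm 1 m, Nat.succ_sub_succ, Nat.add_sub_cancel]
      ring

noncomputable def gbinomPoly (k : ℕ) : Polynomial ℝ :=
  Polynomial.C ((Nat.factorial k : ℝ))⁻¹ * ∏ i ∈ Finset.range k, (Polynomial.X - Polynomial.C (i:ℝ))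

lemma gbinomPoly_eval (y : ℝ) (k : ℕ) : (gbinomPoly k).eval y = gbinom y k := by
  simp [gbinomPoly, gbinom, Polynomial.eval_prod, div_eq_inv_mul]

lemma vandermonde (m : ℕ) (u v : ℝ) :
    gbinom (u + v) m = ∑ i ∈ Finset.range (m+1), gbinom u i * gbinom v (m - i) := by
  have key : (gbinomPoly m).comp (Polynomial.X + Polynomial.C v) =
      ∑ i ∈ Finset.range (m+1), gbinomPoly i * Polynomial.C (gbinom v (m - i)) := by
    apply Polynomial.eq_of_infinite_eval_eq
    apply Set.Infinite.mono (s := Set.range ((↑) : ℕ → ℝ))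
    · rintro _ ⟨u, rfl⟩
      simp only [Set.mem_setOf_eq, Polynomial.eval_comp, Polynomial.eval_add,
        Polynomial.eval_X, Polynomial.eval_C, Polynomial.eval_finset_sum,
        Polynomial.eval_mul, gbinomPoly_eval]
      exact vandermonde_nat m v u
    · exact Set.infinite_range_of_injective Nat.cast_injective
  have := congrArg (Polynomial.eval u) key
  simpa only [Polynomial.eval_comp, Polynomial.eval_add, Polynomial.eval_X,
    Polynomial.eval_C, Polynomial.eval_finset_sum, Polynomial.eval_mul,
    gbinomPoly_eval] using this

lemma absorb (y : ℝ) (i m : ℕ) :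
    gbinom y (i + m) * ((i+m).choose i : ℝ) = gbinom y i * gbinom (y - i) m := by
  unfold gbinom
  rw [Finset.prod_range_add (fun t => y - t)]
  have hfac : ((i+m).choose i : ℝ) * (Nat.factorial i) * (Nat.factorial m) =
      ((i+m).factorial : ℝ) := by
    have h := Nat.choose_mul_factorial_mul_factorial (Nat.le_add_right i m)
    rw [Nat.add_sub_cancel_left] at h
    exact_mod_cast congrArg (Nat.cast : ℕ → ℝ) h
  have h1 : (Nat.factorial (i+m) : ℝ) ≠ 0 := Nat.cast_ne_zero.2 (Nat.factorial_ne_zero _)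
  have h2 : (Nat.factorial i : ℝ) ≠ 0 := Nat.cast_ne_zero.2 (Nat.factorial_ne_zero _)
  have h3 : (Nat.factorial m : ℝ) ≠ 0 := Nat.cast_ne_zero.2 (Nat.factorial_ne_zero _)
  have hpe : ∏ t ∈ Finset.range m, (y - ((i + t : ℕ) : ℝ)) =
      ∏ t ∈ Finset.range m, (y - (i:ℝ) - t) :=
    Finset.prod_congr rfl (fun t _ => by push_cast; ring)
  rw [hpe, div_mul_eq_mul_div, div_mul_div_comm, div_eq_div_iff h1 (mul_ne_zero h2 h3),
    ← hfac]
  ring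

lemma inv_pow_expand (a : ℝ) (ha : a ≠ 0) (j : ℕ) :
    (a⁻¹) ^ j = ∑ i ∈ Finset.range (j+1), ((1-a)/a)^i * (j.choose i : ℝ) := by
  have h : a⁻¹ = (1-a)/a + 1 := by field_simp; ring
  rw [h, add_pow]
  simp

lemma main_sum_identity (n : ℕ) (a y c : ℝ) (ha : a ≠ 0) :
    ∑ j ∈ Finset.range (n+1), (a⁻¹) ^ j * gbinom y j * gbinom (-y-c) (n-j) =
    ∑ i ∈ Finset.range (n+1), ((1-a)/a)^i * gbinom y i * gbinom (-c-i) (n-i) := by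
  set t := (1-a)/a with ht
  calc ∑ j ∈ Finset.range (n+1), (a⁻¹) ^ j * gbinom y j * gbinom (-y-c) (n-j)
      = ∑ j ∈ Finset.range (n+1), ∑ i ∈ Finset.range (n+1),
          t^i * (j.choose i : ℝ) * gbinom y j * gbinom (-y-c) (n-j) := by
        refine Finset.sum_congr rfl fun j hj => ?_
        have hj' := Finset.mem_range.1 hj
        rw [inv_pow_expand a ha j, Finset.sum_mul, Finset.sum_mul]
        refine Finset.sum_subset ?_ ?_
        · exact Finset.range_subset_range.2 (by omega)
        · intro i hi hni
          have h1 : ¬ i < j + 1 := by simpa using hni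
          rw [Nat.choose_eq_zero_of_lt (by omega)]; simp
    _ = ∑ i ∈ Finset.range (n+1), ∑ j ∈ Finset.range (n+1),
          t^i * (j.choose i : ℝ) * gbinom y j * gbinom (-y-c) (n-j) := Finset.sum_comm
    _ = ∑ i ∈ Finset.range (n+1), t^i * gbinom y i * gbinom (-c-i) (n-i) := by
        refine Finset.sum_congr rfl fun i hi => ?_
        have hin : i ≤ n := by simpa [Nat.lt_succ_iff] using hi
        have hsplit : n + 1 = i + (n - i + 1) := by omega
        rw [hsplit, Finset.sum_range_add]
        have hz : ∀ j ∈ Finset.range i,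
            t^i * ((j.choose i : ℝ)) * gbinom y j * gbinom (-y-c) (n-j) = 0 := by
          intro j hj
          rw [Nat.choose_eq_zero_of_lt (Finset.mem_range.1 hj)]; simp
        rw [Finset.sum_congr rfl hz, Finset.sum_const, smul_zero, zero_add]
        have hterm : ∀ m, t^i * ((i+m).choose i : ℝ) * gbinom y (i+m) * gbinom (-y-c) (n-(i+m)) =
            (t^i * gbinom y i) * (gbinom (y - i) m * gbinom (-y-c) ((n-i)-m)) := by
          intro m
          have hsub : n - (i+m) = (n-i)-m := by omega
          rw [hsub, show t^i * ((i+m).choose i : ℝ) * gbinom y (i+m) * gbinom (-y-c) ((n-i)-m)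
            = t^i * (gbinom y (i+m) * ((i+m).choose i : ℝ)) * gbinom (-y-c) ((n-i)-m) from by
              ring, absorb y i m]
          ring
        rw [Finset.sum_congr rfl (fun m _ => hterm m), ← Finset.mul_sum]
        have hv := vandermonde (n-i) (y - (i:ℝ)) (-y-c)
        rw [show (y - (i:ℝ)) + (-y - c) = -c - i from by ring] at hv
        rw [← hv]

lemma gbinom_div (a x : ℝ) (ha : (1:ℝ) - a ≠ 0) (i : ℕ) :
    gbinom (x/(1-a)) i = (∏ t ∈ Finset.range i, (x - t*(1-a))) / ((1-a)^i * Nat.factorial i) := by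
  unfold gbinom
  rw [show ∏ t ∈ Finset.range i, (x/(1-a) - t) =
      ∏ t ∈ Finset.range i, ((x - t*(1-a))/(1-a)) from
    Finset.prod_congr rfl fun t _ => by field_simp]
  rw [Finset.prod_div_distrib, Finset.prod_const, Finset.card_range, div_div]

lemma rewrite_eq (n : ℕ) (x a c : ℝ) (ha0 : a ≠ 0) (ha1 : a ≠ 1) :
    (a-1)^n * meixner n a c (x/(1-a)) =
    ∑ i ∈ Finset.range (n+1), (-1:ℝ)^n * a^(n-i) *
      ((∏ t ∈ Finset.range i, (x - t*(1-a))) / Nat.factorial i) * gbinom (-c-i) (n-i) := by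
  have h1a : (1:ℝ) - a ≠ 0 := sub_ne_zero.2 (fun h => ha1 h.symm)
  unfold meixner
  rw [main_sum_identity n a (x/(1-a)) c ha0, ← mul_assoc, Finset.mul_sum]
  refine Finset.sum_congr rfl fun i hi => ?_
  have hin : i ≤ n := by simpa [Nat.lt_succ_iff] using hi
  rw [gbinom_div a x h1a i]
  have hpow : a^(n-i) = a^n / a^i := pow_sub₀ a ha0 hin
  have hneg : (a-1)^n = (-1)^n * (1-a)^n := by
    rw [show a - 1 = (-1) * (1-a) from by ring, mul_pow]
  have hf : (Nat.factorial i : ℝ) ≠ 0 := Nat.cast_ne_zero.2 (Nat.factorial_ne_zero _)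
  rw [hpow, hneg, div_pow]
  field_simp

lemma reflect_gbinom (α : ℝ) (n i : ℕ) (h : i ≤ n) :
    gbinom (-(α+1)-(i:ℝ)) (n-i) = (-1:ℝ)^(n-i) * gbinom ((n:ℝ)+α) (n-i) := by
  unfold gbinom
  set m := n - i with hm
  have hc : ∀ t ∈ Finset.range m, ((n:ℝ)+α) - ((m-1-t : ℕ):ℝ) = α + 1 + i + t := by
    intro t ht
    have ht' := Finset.mem_range.1 ht
    have hnat : m - 1 - t + (i + 1 + t) = n := by omega
    have := congrArg (Nat.cast : ℕ → ℝ) hnat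
    push_cast at this
    linarith
  rw [← Finset.prod_range_reflect (fun t => ((n:ℝ)+α) - t) m]
  rw [Finset.prod_congr rfl hc]
  rw [show ∏ t ∈ Finset.range m, (-(α+1)-(i:ℝ) - t) =
      ∏ t ∈ Finset.range m, (-1) * (α + 1 + i + t) from
    Finset.prod_congr rfl fun t _ => by ring]
  rw [Finset.prod_mul_distrib, Finset.prod_const, Finset.card_range]
  ring

lemma value_eq (n : ℕ) (α x : ℝ) :
    (∑ i ∈ Finset.range (n+1), (-1:ℝ)^n * (1:ℝ)^(n-i) *
      ((∏ t ∈ Finset.range i, (x - (t:ℝ)*(1-1))) / Nat.factorial i) *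
        gbinom (-(α+1)-(i:ℝ)) (n-i)) = laguerre n α x := by
  unfold laguerre
  refine Finset.sum_congr rfl fun i hi => ?_
  have hin : i ≤ n := by simpa [Nat.lt_succ_iff] using hi
  rw [reflect_gbinom α n i hin, one_pow]
  rw [show ∏ t ∈ Finset.range i, (x - (t:ℝ)*(1-1)) = x^i from by simp]
  have h2 : (-1:ℝ)^n = (-1)^(n-i) * (-1)^i := by rw [← pow_add]; congr 1; omega
  have h3 : (-1:ℝ)^(n-i) * (-1)^(n-i) = 1 := by rw [← mul_pow]; norm_num
  have h4 : (-x)^i = (-1:ℝ)^i * x^i := neg_pow x i ▸ by rw [neg_pow]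
  rw [h2, h4]
  linear_combination ((-1:ℝ)^i * x^i / (Nat.factorial i) * gbinom ((n:ℝ)+α) (n-i)) * h3

theorem stmt5 (n : ℕ) (α x : ℝ) (φ : ℝ → ℝ)
    (hφ : Tendsto φ (𝓝[≠] (1 : ℝ)) (𝓝 (α + 1))) :
    Tendsto (fun a : ℝ => (a - 1) ^ n * meixner n a (φ a) (x / (1 - a)))
      (𝓝[≠] (1 : ℝ)) (𝓝 (laguerre n α x)) := by
  have h1 : ∀ᶠ a in 𝓝[≠](1:ℝ), a ≠ 1 := by
    filter_upwards [self_mem_nhdsWithin] with a ha using ha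
  have h0 : ∀ᶠ a in 𝓝[≠](1:ℝ), a ≠ 0 :=
    (eventually_ne_nhds (by norm_num : (1:ℝ) ≠ 0)).filter_mono nhdsWithin_le_nhds
  have heq : (fun a : ℝ => (a - 1) ^ n * meixner n a (φ a) (x / (1 - a))) =ᶠ[𝓝[≠](1:ℝ)]
      (fun a : ℝ => ∑ i ∈ Finset.range (n+1), (-1:ℝ)^n * a^(n-i) *
        ((∏ t ∈ Finset.range i, (x - t*(1-a))) / Nat.factorial i) *
          gbinom (-(φ a)-i) (n-i)) := by
    filter_upwards [h0, h1] with a ha0 ha1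
    exact rewrite_eq n x a (φ a) ha0 ha1
  rw [tendsto_congr' heq]
  have hG : Continuous (fun p : ℝ × ℝ => ∑ i ∈ Finset.range (n+1), (-1:ℝ)^n * p.1^(n-i) *
      ((∏ t ∈ Finset.range i, (x - t*(1-p.1))) / Nat.factorial i) *
        gbinom (-p.2-i) (n-i)) := by
    refine continuous_finset_sum _ fun i _ => ?_
    unfold gbinom
    have hc1 : Continuous fun p : ℝ×ℝ => ∏ t ∈ Finset.range i, (x - (t:ℝ)*(1-p.1)) :=
      continuous_finset_prod _ fun t _ => by fun_prop
    have hc2 : Continuous fun p : ℝ×ℝ => ∏ t ∈ Finset.range (n-i), (-p.2 - (i:ℝ) - (t:ℝ)) :=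
      continuous_finset_prod _ fun t _ => by fun_prop
    exact ((continuous_const.mul (continuous_fst.pow _)).mul (hc1.div_const _)).mul
      (hc2.div_const _)
  have hpair : Tendsto (fun a : ℝ => (a, φ a)) (𝓝[≠](1:ℝ)) (𝓝 ((1:ℝ), α+1)) :=
    (tendsto_id.mono_left nhdsWithin_le_nhds).prodMk_nhds hφ
  have hlim := (hG.continuousAt (x := ((1:ℝ), α+1))).tendsto.comp hpair
  rw [← value_eq n α x]
  simpa [Function.comp_def] using hlim
end

section
/- Let κ be a positive integer and c a real number with c ∉ {2, 3, ..., κ+1}. Then for every real z, lim_{a→1} (a-1)^κ m_κ^{1/a, 2-c}(z) = (-1)^κ C(κ+1-c, κ), where C denotes the generalized binomial coefficient. -/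
open Filter Topology Finset

lemma descPoch_smeval (x : ℝ) (k : ℕ) :
    (descPochhammer ℤ k).smeval x = ∏ i ∈ Finset.range k, (x - i) := by
  induction k with
  | zero => simp [descPochhammer_zero, Polynomial.smeval_one]
  | succ k ih =>
    rw [descPochhammer_succ_right, Polynomial.smeval_mul, ih, Finset.prod_range_succ,
      Polynomial.smeval_sub, Polynomial.smeval_X, Polynomial.smeval_natCast]
    simp

lemma gbinom_eq (x : ℝ) (k : ℕ) : gbinom x k = Ring.choose x k := by
  have h := Ring.descPochhammer_eq_factorial_smul_choose (R := ℝ) x k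
  rw [descPoch_smeval] at h
  rw [gbinom, h, nsmul_eq_mul]
  field_simp

lemma gbinom_vandermonde (x y : ℝ) (n : ℕ) :
    ∑ j ∈ Finset.range (n + 1), gbinom x j * gbinom y (n - j) = gbinom (x + y) n := by
  simp_rw [gbinom_eq]
  rw [Ring.add_choose_eq n (Commute.all x y), Finset.Nat.sum_antidiagonal_eq_sum_range_succ_mk]

lemma gbinom_reflect (c : ℝ) (κ : ℕ) :
    gbinom (c - 2) κ = (-1) ^ κ * gbinom ((κ : ℝ) + 1 - c) κ := by
  have hp : ∏ i ∈ Finset.range κ, ((c - 2) - i) =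
      ∏ i ∈ Finset.range κ, -(((κ : ℝ) + 1 - c) - i) := by
    rw [← Finset.prod_range_reflect]
    apply Finset.prod_congr rfl
    intro i hi
    have hi' : i < κ := Finset.mem_range.mp hi
    have hcast : ((κ - 1 - i : ℕ) : ℝ) = (κ : ℝ) - 1 - i := by
      have h2 : κ - 1 - i + i + 1 = κ := by omega
      have h3 : ((κ - 1 - i + i + 1 : ℕ) : ℝ) = (κ : ℝ) := by rw [h2]
      push_cast at h3
      linarith
    rw [hcast]; ring
  rw [gbinom, hp, gbinom]
  simp_rw [neg_eq_neg_one_mul ((((κ : ℝ) + 1 - c) - _))]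
  rw [Finset.prod_mul_distrib, Finset.prod_const, Finset.card_range, mul_div_assoc]

theorem stmt6 (κ : ℕ) (hκ : 0 < κ) (c : ℝ)
    (hc : ∀ j : ℕ, 2 ≤ j → j ≤ κ + 1 → c ≠ (j : ℝ)) (z : ℝ) :
    Tendsto (fun a : ℝ => (a - 1) ^ κ * meixner κ a⁻¹ (2 - c) z)
      (𝓝[({0, 1} : Set ℝ)ᶜ] (1 : ℝ)) (𝓝 ((-1) ^ κ * gbinom ((κ : ℝ) + 1 - c) κ)) := by
  set g : ℝ → ℝ := fun a =>
    ∑ j ∈ Finset.range (κ + 1), a ^ j * gbinom z j * gbinom (-z - (2 - c)) (κ - j) with hg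
  have heq : ∀ a : ℝ, a ∈ ({0, 1} : Set ℝ)ᶜ →
      (a - 1) ^ κ * meixner κ a⁻¹ (2 - c) z = g a := by
    intro a ha
    simp only [Set.mem_compl_iff, Set.mem_insert_iff, Set.mem_singleton_iff, not_or] at ha
    obtain ⟨h0, h1⟩ := ha
    have hne : a - 1 ≠ 0 := sub_ne_zero.mpr h1
    have key : (a - 1) ^ κ * ((a⁻¹) ^ κ / (1 - a⁻¹) ^ κ) = 1 := by
      rw [show (1 : ℝ) - a⁻¹ = (a - 1) * a⁻¹ by field_simp]
      rw [mul_pow]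
      field_simp
    rw [meixner, ← mul_assoc, key, one_mul, hg]
    simp [inv_inv]
  have hcont : Continuous g := by
    apply continuous_finset_sum
    intro j _
    exact ((continuous_pow j).mul continuous_const).mul continuous_const
  have hg1 : g 1 = (-1) ^ κ * gbinom ((κ : ℝ) + 1 - c) κ := by
    rw [hg]
    simp only [one_pow, one_mul]
    rw [gbinom_vandermonde z (-z - (2 - c)) κ]
    rw [show z + (-z - (2 - c)) = c - 2 by ring]
    exact gbinom_reflect c κ
  have := (hcont.tendsto 1).mono_left (nhdsWithin_le_nhds (s := ({0, 1} : Set ℝ)ᶜ))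
  rw [hg1] at this
  exact this.congr' (eventually_nhdsWithin_of_forall (fun a ha => (heq a ha).symm))
end

section
/- Let κ be a positive integer and u > 0. Define L_n^{κ;u}(x) = L_n^{κ}(x) - [(κ-1)! + u(n+1)_κ]/[(κ-1)! + u(n)_κ] · L_{n-1}^{κ}(x). Then for every real x and n ≥ 0, lim_{a→1} (a-1)^n m_n^{a, κ+1+(1-a)^κ/u; κ}(x/(1-a)) = L_n^{κ;u}(x), where m_n^{a,c;κ}(x) = m_n^{a,c}(x) + [a·m_κ^{1/a,2-c}(-n-1)]/[(1-a)·m_κ^{1/a,2-c}(-n)] · m_{n-1}^{a,c}(x), provided m_κ^{1/a,2-c}(-n) ≠ 0 for the relevant values of a. -/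
open Filter Topology Finset

/-- Krall Meixner polynomial m_n^{a,c;κ}(x). -/
noncomputable def krallMeixner (n : ℕ) (a c : ℝ) (κ : ℕ) (x : ℝ) : ℝ :=
  meixner n a c x +
    (a * meixner κ a⁻¹ (2 - c) (-(n : ℝ) - 1)) /
      ((1 - a) * meixner κ a⁻¹ (2 - c) (-(n : ℝ))) *
      (if n = 0 then 0 else meixner (n - 1) a c x)

/-- Krall Laguerre polynomial L_n^{κ;u}(x). -/
noncomputable def krallLaguerre (n κ : ℕ) (u x : ℝ) : ℝ :=
  laguerre n κ x -
    ((Nat.factorial (κ - 1) + u * poch ((n : ℝ) + 1) κ) /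
        (Nat.factorial (κ - 1) + u * poch (n : ℝ) κ)) *
      (if n = 0 then 0 else laguerre (n - 1) κ x)

section AuxLemmas

lemma gbinom_absorb (y : ℝ) (k : ℕ) :
    ((k : ℝ) + 1) * gbinom y (k + 1) = (y - k) * gbinom y k := by
  unfold gbinom
  rw [Finset.prod_range_succ, Nat.factorial_succ]
  have h1 : (Nat.factorial k : ℝ) ≠ 0 := Nat.cast_ne_zero.2 (Nat.factorial_ne_zero k)
  have h2 : ((k : ℝ) + 1) ≠ 0 := by positivity
  push_cast
  field_simp

lemma gbinom_vandermonde_s9 (N : ℕ) : ∀ (A B : ℝ),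
    ∑ m ∈ Finset.range (N + 1), gbinom A m * gbinom B (N - m) = gbinom (A + B) N := by
  induction N with
  | zero => intro A B; simp [gbinom_zero]
  | succ N ih =>
    intro A B
    have hNe : ((N : ℝ) + 1) ≠ 0 := by positivity
    apply mul_left_cancel₀ hNe
    rw [Finset.mul_sum]
    have hsplit : ∀ m ∈ Finset.range (N + 2),
        ((N : ℝ) + 1) * (gbinom A m * gbinom B (N + 1 - m))
          = (m : ℝ) * gbinom A m * gbinom B (N + 1 - m)
            + gbinom A m * (((N + 1 - m : ℕ) : ℝ) * gbinom B (N + 1 - m)) := by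
      intro m hm
      have hm' : m ≤ N + 1 := Nat.lt_succ_iff.mp (Finset.mem_range.mp hm)
      have : ((N + 1 - m : ℕ) : ℝ) = (N : ℝ) + 1 - m := by
        rw [Nat.cast_sub hm']; push_cast; ring
      rw [this]; ring
    rw [Finset.sum_congr rfl hsplit, Finset.sum_add_distrib]
    have hT1 : ∑ m ∈ Finset.range (N + 2), (m : ℝ) * gbinom A m * gbinom B (N + 1 - m)
        = ∑ m ∈ Finset.range (N + 1), (A - m) * (gbinom A m * gbinom B (N - m)) := by
      rw [Finset.sum_range_succ']
      simp only [Nat.cast_zero, zero_mul, add_zero]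
      refine Finset.sum_congr rfl fun m hm => ?_
      have : ((m + 1 : ℕ) : ℝ) * gbinom A (m + 1) = (A - m) * gbinom A m := by
        push_cast; exact gbinom_absorb A m
      have hsub : N + 1 - (m + 1) = N - m := by omega
      rw [hsub]
      push_cast
      calc ((m : ℝ) + 1) * gbinom A (m + 1) * gbinom B (N - m)
          = (((m + 1 : ℕ) : ℝ) * gbinom A (m + 1)) * gbinom B (N - m) := by push_cast; ring
        _ = (A - m) * (gbinom A m * gbinom B (N - m)) := by rw [this]; ring
    have hT2 : ∑ m ∈ Finset.range (N + 2),
          gbinom A m * (((N + 1 - m : ℕ) : ℝ) * gbinom B (N + 1 - m))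
        = ∑ m ∈ Finset.range (N + 1), (B - ((N - m : ℕ) : ℝ)) * (gbinom A m * gbinom B (N - m)) := by
      rw [Finset.sum_range_succ]
      simp only [Nat.sub_self, Nat.cast_zero, zero_mul, mul_zero, add_zero]
      refine Finset.sum_congr rfl fun m hm => ?_
      have hm' : m ≤ N := Nat.lt_succ_iff.mp (Finset.mem_range.mp hm)
      have hsub : N + 1 - m = (N - m) + 1 := by omega
      rw [hsub]
      have := gbinom_absorb B (N - m)
      push_cast at this ⊢
      rw [this]; ring
    rw [hT1, hT2, ← Finset.sum_add_distrib]
    have : ∀ m ∈ Finset.range (N + 1),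
        (A - m) * (gbinom A m * gbinom B (N - m))
          + (B - ((N - m : ℕ) : ℝ)) * (gbinom A m * gbinom B (N - m))
        = (A + B - N) * (gbinom A m * gbinom B (N - m)) := by
      intro m hm
      have hm' : m ≤ N := Nat.lt_succ_iff.mp (Finset.mem_range.mp hm)
      have : ((N - m : ℕ) : ℝ) = (N : ℝ) - m := by rw [Nat.cast_sub hm']
      rw [this]; ring
    rw [Finset.sum_congr rfl this, ← Finset.mul_sum, ih A B]
    have := gbinom_absorb (A + B) N
    push_cast at this ⊢
    rw [this]

lemma gbinom_trinomial (x : ℝ) {i j : ℕ} (h : i ≤ j) :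
    gbinom x j * (j.choose i : ℝ) = gbinom x i * gbinom (x - i) (j - i) := by
  unfold gbinom
  have hj : j = i + (j - i) := by omega
  rw [Nat.cast_choose ℝ h]
  rw [show (∏ m ∈ Finset.range j, (x - m)) = ∏ m ∈ Finset.range (i + (j - i)), (x - m) by rw [← hj]]
  rw [Finset.prod_range_add]
  have : ∀ m ∈ Finset.range (j - i), (x - ((i + m : ℕ) : ℝ)) = (x - i - m) := by
    intro m _; push_cast; ring
  rw [Finset.prod_congr rfl this]
  have h1 : (Nat.factorial j : ℝ) ≠ 0 := Nat.cast_ne_zero.2 (Nat.factorial_ne_zero _)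
  have h2 : (Nat.factorial i : ℝ) ≠ 0 := Nat.cast_ne_zero.2 (Nat.factorial_ne_zero _)
  have h3 : (Nat.factorial (j - i) : ℝ) ≠ 0 := Nat.cast_ne_zero.2 (Nat.factorial_ne_zero _)
  field_simp

end AuxLemmas
section Rep

lemma meixner_rep (n : ℕ) (a c x : ℝ) (ha : a ≠ 0) (ha1 : a ≠ 1) :
    meixner n a c x = ∑ i ∈ Finset.range (n + 1),
      (a / (1 - a)) ^ (n - i) * (gbinom x i * gbinom (-c - i) (n - i)) := by
  have h1a : (1 : ℝ) - a ≠ 0 := sub_ne_zero.2 (Ne.symm ha1)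
  set q : ℝ := a / (1 - a) with hq
  have hqne : q ≠ 0 := div_ne_zero ha h1a
  set r : ℝ := (1 - a) / a with hr
  have hinv : a⁻¹ = r + 1 := by rw [hr]; field_simp; ring
  have hexpand : ∀ j : ℕ, (a⁻¹) ^ j = ∑ i ∈ Finset.range (j + 1), r ^ i * (j.choose i : ℝ) := by
    intro j
    rw [hinv, add_pow]
    refine Finset.sum_congr rfl fun i _ => by ring
  unfold meixner
  have key : ∑ j ∈ Finset.range (n + 1), (a⁻¹) ^ j * gbinom x j * gbinom (-x - c) (n - j)
      = ∑ i ∈ Finset.range (n + 1), r ^ i * (gbinom x i * gbinom (-c - i) (n - i)) := by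
    have step1 : ∀ j ∈ Finset.range (n + 1),
        (a⁻¹) ^ j * gbinom x j * gbinom (-x - c) (n - j)
          = ∑ i ∈ Finset.range (n + 1),
              r ^ i * ((gbinom x j * (j.choose i : ℝ)) * gbinom (-x - c) (n - j)) := by
      intro j hj
      have hj' : j + 1 ≤ n + 1 := Finset.mem_range.mp hj
      rw [hexpand j, Finset.sum_mul, Finset.sum_mul]
      rw [← Finset.sum_subset (Finset.range_subset_range.2 hj')]
      · exact Finset.sum_congr rfl fun i _ => by ring
      · intro i hi hni
        have : j < i := by
          simp only [Finset.mem_range] at hi hni; omega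
        rw [Nat.choose_eq_zero_of_lt this]
        push_cast; ring
    rw [Finset.sum_congr rfl step1, Finset.sum_comm]
    refine Finset.sum_congr rfl fun i hi => ?_
    have hin : i ≤ n := Nat.lt_succ_iff.mp (Finset.mem_range.mp hi)
    rw [← Finset.mul_sum]
    congr 1
    have drop : ∑ j ∈ Finset.range (n + 1),
          (gbinom x j * (j.choose i : ℝ)) * gbinom (-x - c) (n - j)
        = ∑ j ∈ Finset.Ico i (n + 1), (gbinom x j * (j.choose i : ℝ)) * gbinom (-x - c) (n - j) := by
      rw [Finset.range_eq_Ico]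
      refine (Finset.sum_subset (Finset.Ico_subset_Ico (Nat.zero_le i) le_rfl) ?_).symm
      intro j hj hnj
      have : j < i := by
        simp only [Finset.mem_Ico] at hj hnj; omega
      rw [Nat.choose_eq_zero_of_lt this]
      push_cast; ring
    rw [drop, Finset.sum_Ico_eq_sum_range]
    have hsub : n + 1 - i = (n - i) + 1 := by omega
    rw [hsub]
    have step2 : ∀ m ∈ Finset.range ((n - i) + 1),
        (gbinom x (i + m) * ((i + m).choose i : ℝ)) * gbinom (-x - c) (n - (i + m))
          = gbinom x i * (gbinom (x - i) m * gbinom (-x - c) ((n - i) - m)) := by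
      intro m hm
      have h1 : gbinom x (i + m) * ((i + m).choose i : ℝ)
          = gbinom x i * gbinom (x - i) ((i + m) - i) := gbinom_trinomial x (Nat.le_add_right i m)
      have h2 : (i + m) - i = m := by omega
      have h3 : n - (i + m) = (n - i) - m := by omega
      rw [h1, h2, h3]; ring
    rw [Finset.sum_congr rfl step2, ← Finset.mul_sum, gbinom_vandermonde_s9]
    congr 1
    ring_nf
  rw [key, Finset.mul_sum]
  refine Finset.sum_congr rfl fun i hi => ?_
  have hin : i ≤ n := Nat.lt_succ_iff.mp (Finset.mem_range.mp hi)
  have hqpow : a ^ n / (1 - a) ^ n = q ^ n := by rw [hq, div_pow]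
  have hrq : r = q⁻¹ := by rw [hr, hq, inv_div]
  rw [hqpow, hrq, ← mul_assoc]
  congr 1
  rw [inv_pow, ← pow_sub₀ q hqne hin]

end Rep
section Misc

lemma continuous_gbinom (k : ℕ) : Continuous (fun y : ℝ => gbinom y k) := by
  unfold gbinom
  exact (continuous_finset_prod _ fun i _ => continuous_id.sub continuous_const).div_const _

lemma prod_cast_factorial (k : ℕ) :
    ∏ m ∈ Finset.range k, ((k : ℝ) - m) = (Nat.factorial k : ℝ) := by
  have hfact : (Nat.factorial k : ℝ) = ∏ m ∈ Finset.range k, ((m : ℝ) + 1) := by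
    induction k with
    | zero => simp
    | succ k ih => rw [Finset.prod_range_succ, ← ih, Nat.factorial_succ]; push_cast; ring
  rw [hfact, ← Finset.prod_range_reflect (fun m => (m : ℝ) + 1) k]
  refine Finset.prod_congr rfl fun m hm => ?_
  have hm' : m < k := Finset.mem_range.mp hm
  have : ((k - 1 - m : ℕ) : ℝ) = (k : ℝ) - 1 - m := by
    rw [Nat.cast_sub (by omega), Nat.cast_sub (by omega)]; push_cast; ring
  rw [this]; ring

lemma gbinom_neg_poch (y : ℝ) (k : ℕ) :
    gbinom (-y) k = (-1) ^ k * poch y k / (Nat.factorial k) := by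
  unfold gbinom poch
  congr 1
  calc ∏ i ∈ Finset.range k, (-y - i) = ∏ i ∈ Finset.range k, (-1) * (y + i) := by
        refine Finset.prod_congr rfl fun i _ => by ring
    _ = (-1) ^ k * ∏ i ∈ Finset.range k, (y + i) := by
        rw [Finset.prod_mul_distrib, Finset.prod_const, Finset.card_range]
    _ = _ := rfl

lemma gbinom_neg_reflect (y : ℝ) (k : ℕ) :
    gbinom (-y) k = (-1) ^ k * gbinom (y + k - 1) k := by
  rw [gbinom_neg_poch]
  unfold gbinom poch
  rw [← Finset.prod_range_reflect (fun i => y + i) k]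
  have : ∀ m ∈ Finset.range k, (y + k - 1 - m) = y + ((k - 1 - m : ℕ) : ℝ) := by
    intro m hm
    have hm' : m < k := Finset.mem_range.mp hm
    rw [Nat.cast_sub (by omega), Nat.cast_sub (by omega)]; push_cast; ring
  rw [Finset.prod_congr rfl this]
  ring

lemma poch_nat_nonneg (n : ℕ) (k : ℕ) : 0 ≤ poch (n : ℝ) k :=
  Finset.prod_nonneg fun i _ => by positivity

end Misc
section Scaled

lemma term_transform (n i : ℕ) (hin : i ≤ n) (a x W : ℝ) (ha1 : a ≠ 1) :
    (a - 1) ^ n * ((a / (1 - a)) ^ (n - i) * (gbinom (x / (1 - a)) i * W))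
      = (-1) ^ n * a ^ (n - i) *
          ((∏ m ∈ Finset.range i, (x - m * (1 - a))) / (Nat.factorial i)) * W := by
  have h1a : (1 : ℝ) - a ≠ 0 := sub_ne_zero.2 (Ne.symm ha1)
  have e1 : (a - 1) ^ n * (a / (1 - a)) ^ (n - i) = (-1) ^ n * a ^ (n - i) * (1 - a) ^ i := by
    rw [div_pow, show (a - 1) = -(1 - a) by ring, neg_pow,
      show (1 - a) ^ n = (1 - a) ^ i * (1 - a) ^ (n - i) by rw [← pow_add]; congr 1; omega]
    field_simp
  have e2 : (∏ m ∈ Finset.range i, (x - m * (1 - a)))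
      = (1 - a) ^ i * ∏ m ∈ Finset.range i, (x / (1 - a) - m) := by
    rw [show (1 - a) ^ i = ∏ _m ∈ Finset.range i, (1 - a) by
      rw [Finset.prod_const, Finset.card_range]]
    rw [← Finset.prod_mul_distrib]
    refine Finset.prod_congr rfl fun m _ => ?_
    field_simp
  show (a - 1) ^ n * ((a / (1 - a)) ^ (n - i) *
      ((∏ m ∈ Finset.range i, (x / (1 - a) - m)) / (Nat.factorial i) * W)) = _
  rw [e2]
  linear_combination ((∏ m ∈ Finset.range i, (x / (1 - a) - m)) / (Nat.factorial i) * W) * e1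

lemma meixner_scaled_tendsto (κ : ℕ) (hκ : 0 < κ) (u : ℝ) (hu : u ≠ 0) (n : ℕ) (x : ℝ) :
    Tendsto (fun a : ℝ =>
        (a - 1) ^ n * meixner n a ((κ : ℝ) + 1 + (1 - a) ^ κ / u) (x / (1 - a)))
      (𝓝[({0, 1} : Set ℝ)ᶜ] (1 : ℝ)) (𝓝 (laguerre n κ x)) := by
  set G : ℝ → ℝ := fun a => ∑ i ∈ Finset.range (n + 1),
      (-1) ^ n * a ^ (n - i) *
        ((∏ m ∈ Finset.range i, (x - m * (1 - a))) / (Nat.factorial i)) *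
        gbinom (-((κ : ℝ) + 1 + (1 - a) ^ κ / u) - i) (n - i) with hG
  have hGcont : Continuous G := by
    refine continuous_finset_sum _ fun i _ => ?_
    refine Continuous.mul (Continuous.mul ?_ ?_) ?_
    · exact continuous_const.mul (continuous_pow _)
    · exact (continuous_finset_prod _ fun m _ =>
        continuous_const.sub (continuous_const.mul (continuous_const.sub continuous_id))).div_const _
    · refine (continuous_gbinom _).comp ?_
      refine Continuous.sub (Continuous.neg ?_) continuous_const
      exact continuous_const.add (((continuous_const.sub continuous_id).pow _).div_const _)
  have hG1 : G 1 = laguerre n κ x := by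
    rw [hG]
    simp only [laguerre]
    refine Finset.sum_congr rfl fun i hi => ?_
    have hin : i ≤ n := Nat.lt_succ_iff.mp (Finset.mem_range.mp hi)
    have h0 : (1 : ℝ) - 1 = 0 := by ring
    rw [h0, zero_pow hκ.ne', zero_div, add_zero]
    simp only [mul_zero, sub_zero, one_pow, Finset.prod_const, Finset.card_range]
    have harg : -((κ : ℝ) + 1) - i = -((κ : ℝ) + 1 + i) := by ring
    rw [harg, gbinom_neg_reflect]
    have harg2 : (κ : ℝ) + 1 + i + ((n - i : ℕ) : ℝ) - 1 = (n : ℝ) + κ := by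
      rw [Nat.cast_sub hin]; ring
    rw [harg2]
    have hsign : (-1 : ℝ) ^ n * ((-1) ^ (n - i) * gbinom ((n : ℝ) + κ) (n - i))
        = (-1) ^ i * gbinom ((n : ℝ) + κ) (n - i) := by
      rw [show (-1 : ℝ) ^ n = (-1) ^ (n - i) * (-1) ^ i by rw [← pow_add]; congr 1; omega]
      rw [show ((-1 : ℝ) ^ (n - i) * (-1) ^ i) * ((-1) ^ (n - i) * gbinom ((n : ℝ) + κ) (n - i))
          = ((-1) ^ (n - i) * (-1) ^ (n - i)) * ((-1) ^ i * gbinom ((n : ℝ) + κ) (n - i)) by ring]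
      rw [← pow_add]
      rw [Even.neg_one_pow ⟨n - i, rfl⟩, one_mul]
    calc (-1 : ℝ) ^ n * 1 * (x ^ i / (Nat.factorial i)) *
          ((-1) ^ (n - i) * gbinom ((n : ℝ) + κ) (n - i))
        = ((-1 : ℝ) ^ n * ((-1) ^ (n - i) * gbinom ((n : ℝ) + κ) (n - i))) *
            (x ^ i / (Nat.factorial i)) := by ring
      _ = ((-1) ^ i * gbinom ((n : ℝ) + κ) (n - i)) * (x ^ i / (Nat.factorial i)) := by
          rw [hsign]
      _ = (-x) ^ i / (Nat.factorial i) * gbinom ((n : ℝ) + κ) (n - i) := by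
          rw [neg_pow]; ring
  have hEq : ∀ᶠ a in (𝓝[({0, 1} : Set ℝ)ᶜ] (1 : ℝ)),
      (a - 1) ^ n * meixner n a ((κ : ℝ) + 1 + (1 - a) ^ κ / u) (x / (1 - a)) = G a := by
    filter_upwards [self_mem_nhdsWithin] with a ha
    have ha0 : a ≠ 0 := fun h => ha (by simp [h])
    have ha1 : a ≠ 1 := fun h => ha (by simp [h])
    rw [meixner_rep n a _ _ ha0 ha1, Finset.mul_sum, hG]
    refine Finset.sum_congr rfl fun i hi => ?_
    exact term_transform n i (Nat.lt_succ_iff.mp (Finset.mem_range.mp hi)) a x _ ha1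
  have hT : Tendsto G (𝓝[({0, 1} : Set ℝ)ᶜ] (1 : ℝ)) (𝓝 (laguerre n κ x)) := by
    rw [← hG1]
    exact (hGcont.tendsto 1).mono_left nhdsWithin_le_nhds
  exact Tendsto.congr' (EventuallyEq.symm hEq) hT

end Scaled
section DtilSection

noncomputable def Dtil (κ : ℕ) (u y : ℝ) (a : ℝ) : ℝ :=
  (∑ i ∈ Finset.range κ, (a - 1) ^ i * gbinom y i *
      (((-1) ^ κ / u) * (∏ m ∈ (Finset.range (κ - i)).erase (κ - 1 - i),
        ((κ : ℝ) - 1 - i + (1 - a) ^ κ / u - m)) / (Nat.factorial (κ - i))))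
    + gbinom y κ

lemma gbinom_factor (κ i : ℕ) (hi : i < κ) (ε : ℝ) :
    gbinom ((κ : ℝ) - 1 - i + ε) (κ - i)
      = ε * (∏ m ∈ (Finset.range (κ - i)).erase (κ - 1 - i),
          ((κ : ℝ) - 1 - i + ε - m)) / (Nat.factorial (κ - i)) := by
  unfold gbinom
  have hmem : κ - 1 - i ∈ Finset.range (κ - i) := by
    simp only [Finset.mem_range]; omega
  rw [← Finset.mul_prod_erase _ _ hmem]
  have hcast : (κ : ℝ) - 1 - i + ε - ((κ - 1 - i : ℕ) : ℝ) = ε := by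
    rw [Nat.cast_sub (by omega : i ≤ κ - 1), Nat.cast_sub (by omega : 1 ≤ κ)]
    push_cast; ring
  rw [hcast]

lemma sumA (κ : ℕ) (u y a : ℝ) :
    ∑ i ∈ Finset.range (κ + 1), (a - 1) ^ i *
        (gbinom y i * gbinom ((κ : ℝ) - 1 - i + (1 - a) ^ κ / u) (κ - i))
      = (a - 1) ^ κ * Dtil κ u y a := by
  rw [Finset.sum_range_succ]
  unfold Dtil
  rw [mul_add, Finset.mul_sum]
  congr 1
  · refine Finset.sum_congr rfl fun i hi => ?_
    have hi' : i < κ := Finset.mem_range.mp hi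
    rw [gbinom_factor κ i hi' ((1 - a) ^ κ / u)]
    set P := ∏ m ∈ (Finset.range (κ - i)).erase (κ - 1 - i),
        ((κ : ℝ) - 1 - i + (1 - a) ^ κ / u - m) with hP
    rw [show (1 - a) ^ κ = (-1) ^ κ * (a - 1) ^ κ by
      rw [show (1 - a) = -(a - 1) by ring, neg_pow]]
    ring
  · rw [Nat.sub_self, show gbinom ((κ : ℝ) - 1 - κ + (1 - a) ^ κ / u) 0 = 1 from gbinom_zero _]
    ring

lemma meixner_inv_eq (κ : ℕ) (u y a : ℝ) (ha0 : a ≠ 0) (ha1 : a ≠ 1) :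
    meixner κ a⁻¹ (2 - ((κ : ℝ) + 1 + (1 - a) ^ κ / u)) y = Dtil κ u y a := by
  have hb0 : a⁻¹ ≠ 0 := inv_ne_zero ha0
  have hb1 : a⁻¹ ≠ 1 := fun h => ha1 (inv_eq_one.mp h)
  have ha1' : a - 1 ≠ 0 := sub_ne_zero.2 ha1
  rw [meixner_rep κ a⁻¹ _ y hb0 hb1]
  have h1b : 1 - a⁻¹ ≠ 0 := sub_ne_zero.2 fun h => hb1 h.symm
  have hq : a⁻¹ / (1 - a⁻¹) = (a - 1)⁻¹ := by
    rw [div_eq_iff h1b, inv_mul_eq_div, eq_div_iff ha1']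
    field_simp
  have hterm : ∀ i ∈ Finset.range (κ + 1),
      (a⁻¹ / (1 - a⁻¹)) ^ (κ - i) *
          (gbinom y i * gbinom (-(2 - ((κ : ℝ) + 1 + (1 - a) ^ κ / u)) - i) (κ - i))
        = ((a - 1) ^ κ)⁻¹ * ((a - 1) ^ i *
            (gbinom y i * gbinom ((κ : ℝ) - 1 - i + (1 - a) ^ κ / u) (κ - i))) := by
    intro i hi
    have hik : i ≤ κ := Nat.lt_succ_iff.mp (Finset.mem_range.mp hi)
    rw [hq, inv_pow]
    rw [show -(2 - ((κ : ℝ) + 1 + (1 - a) ^ κ / u)) - i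
        = (κ : ℝ) - 1 - i + (1 - a) ^ κ / u by ring]
    rw [show ((a - 1) ^ (κ - i))⁻¹ = (a - 1) ^ i * ((a - 1) ^ κ)⁻¹ by
      rw [eq_comm, mul_inv_eq_iff_eq_mul₀ (pow_ne_zero _ ha1'), inv_mul_eq_div,
        eq_div_iff (pow_ne_zero _ ha1'), ← pow_add]
      congr 1
      omega]
    ring
  rw [Finset.sum_congr rfl hterm, ← Finset.mul_sum, sumA κ u y a,
    inv_mul_cancel_left₀ (pow_ne_zero _ ha1')]

end DtilSection
section RatioSection

lemma continuous_Dtil (κ : ℕ) (u y : ℝ) : Continuous (Dtil κ u y) := by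
  unfold Dtil
  refine Continuous.add (continuous_finset_sum _ fun i _ => ?_) continuous_const
  refine Continuous.mul (Continuous.mul ?_ continuous_const) ?_
  · exact (continuous_id.sub continuous_const).pow _
  · refine Continuous.div_const (Continuous.mul continuous_const ?_) _
    refine continuous_finset_prod _ fun m _ => Continuous.sub ?_ continuous_const
    exact continuous_const.add (((continuous_const.sub continuous_id).pow _).div_const _)

lemma Dtil_one (κ : ℕ) (hκ : 0 < κ) (u y : ℝ) :
    Dtil κ u y 1 = (-1) ^ κ / (u * Nat.factorial κ) * (Nat.factorial (κ - 1)) + gbinom y κ := by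
  obtain ⟨κ', rfl⟩ : ∃ κ', κ = κ' + 1 := ⟨κ - 1, by omega⟩
  unfold Dtil
  congr 1
  rw [Finset.sum_range_succ']
  have hz : ∀ i ∈ Finset.range κ', ((1 : ℝ) - 1) ^ (i + 1) * gbinom y (i + 1) *
      (((-1) ^ (κ' + 1) / u) * (∏ m ∈ (Finset.range (κ' + 1 - (i + 1))).erase (κ' + 1 - 1 - (i + 1)),
        (((κ' + 1 : ℕ) : ℝ) - 1 - (i + 1 : ℕ) + (1 - 1) ^ (κ' + 1) / u - m)) /
        (Nat.factorial (κ' + 1 - (i + 1)))) = 0 := by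
    intro i _
    rw [show (1 : ℝ) - 1 = 0 by ring, zero_pow (Nat.succ_ne_zero i), zero_mul, zero_mul]
  rw [Finset.sum_eq_zero hz, zero_add]
  rw [show (1 : ℝ) - 1 = 0 by ring, pow_zero, one_mul, gbinom_zero,
    zero_pow (Nat.succ_ne_zero κ'), zero_div]
  rw [show κ' + 1 - 0 = κ' + 1 from rfl, show κ' + 1 - 1 - 0 = κ' from rfl]
  rw [Finset.range_add_one, Finset.erase_insert Finset.notMem_range_self]
  have hprod : (∏ m ∈ Finset.range κ',
      (((κ' + 1 : ℕ) : ℝ) - 1 - (0 : ℕ) + 0 - m)) = (Nat.factorial κ' : ℝ) := by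
    rw [← prod_cast_factorial κ']
    refine Finset.prod_congr rfl fun m _ => ?_
    push_cast; ring
  rw [hprod]
  rw [show κ' + 1 - 1 = κ' from rfl]
  have h1 : (Nat.factorial (κ' + 1) : ℝ) ≠ 0 := Nat.cast_ne_zero.2 (Nat.factorial_ne_zero _)
  ring

lemma Dtil_one_neg (κ : ℕ) (hκ : 0 < κ) (u : ℝ) (hu : u ≠ 0) (t : ℝ) :
    Dtil κ u (-t) 1 = (-1) ^ κ / (u * Nat.factorial κ) *
      ((Nat.factorial (κ - 1) : ℝ) + u * poch t κ) := by
  rw [Dtil_one κ hκ u (-t), gbinom_neg_poch]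
  have h1 : (Nat.factorial κ : ℝ) ≠ 0 := Nat.cast_ne_zero.2 (Nat.factorial_ne_zero _)
  field_simp

lemma ratio_tendsto (κ : ℕ) (hκ : 0 < κ) (u : ℝ) (hu : 0 < u) (n : ℕ) :
    Tendsto (fun a : ℝ => -(a * Dtil κ u (-(n : ℝ) - 1) a / Dtil κ u (-(n : ℝ)) a)) (𝓝 1)
      (𝓝 (-(((Nat.factorial (κ - 1) : ℝ) + u * poch ((n : ℝ) + 1) κ) /
        ((Nat.factorial (κ - 1) : ℝ) + u * poch (n : ℝ) κ)))) := by
  have hD1 : Dtil κ u (-(n : ℝ)) 1 = (-1) ^ κ / (u * Nat.factorial κ) *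
      ((Nat.factorial (κ - 1) : ℝ) + u * poch (n : ℝ) κ) := Dtil_one_neg κ hκ u hu.ne' (n : ℝ)
  have hN1 : Dtil κ u (-(n : ℝ) - 1) 1 = (-1) ^ κ / (u * Nat.factorial κ) *
      ((Nat.factorial (κ - 1) : ℝ) + u * poch ((n : ℝ) + 1) κ) := by
    rw [show -(n : ℝ) - 1 = -((n : ℝ) + 1) by ring]
    exact Dtil_one_neg κ hκ u hu.ne' ((n : ℝ) + 1)
  have hCne : (-1 : ℝ) ^ κ / (u * Nat.factorial κ) ≠ 0 := by
    apply div_ne_zero (pow_ne_zero _ (by norm_num))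
    exact mul_ne_zero hu.ne' (Nat.cast_ne_zero.2 (Nat.factorial_ne_zero _))
  have hpos : (0 : ℝ) < (Nat.factorial (κ - 1) : ℝ) + u * poch (n : ℝ) κ := by
    have h1 : (0 : ℝ) < (Nat.factorial (κ - 1) : ℝ) := Nat.cast_pos.2 (Nat.factorial_pos _)
    have h2 : (0 : ℝ) ≤ u * poch (n : ℝ) κ := mul_nonneg hu.le (poch_nat_nonneg n κ)
    linarith
  have hpos1 : (0 : ℝ) < (Nat.factorial (κ - 1) : ℝ) + u * poch ((n : ℝ) + 1) κ := by
    have h1 : (0 : ℝ) < (Nat.factorial (κ - 1) : ℝ) := Nat.cast_pos.2 (Nat.factorial_pos _)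
    have h2 : (0 : ℝ) ≤ u * poch ((n : ℝ) + 1) κ := by
      refine mul_nonneg hu.le ?_
      rw [show ((n : ℝ) + 1) = ((n + 1 : ℕ) : ℝ) by push_cast; ring]
      exact poch_nat_nonneg (n + 1) κ
    linarith
  have hDne : Dtil κ u (-(n : ℝ)) 1 ≠ 0 := by
    rw [hD1]; exact mul_ne_zero hCne hpos.ne'
  have hnum : Tendsto (fun a : ℝ => a * Dtil κ u (-(n : ℝ) - 1) a) (𝓝 1)
      (𝓝 (1 * Dtil κ u (-(n : ℝ) - 1) 1)) :=
    (continuous_id.mul (continuous_Dtil κ u _)).tendsto 1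
  have hden : Tendsto (fun a : ℝ => Dtil κ u (-(n : ℝ)) a) (𝓝 1)
      (𝓝 (Dtil κ u (-(n : ℝ)) 1)) := (continuous_Dtil κ u _).tendsto 1
  have := (hnum.div hden hDne).neg
  convert this using 2
  · rfl
  rw [hN1, hD1, one_mul, mul_div_mul_left _ _ hCne]

end RatioSection
theorem stmt9 (κ : ℕ) (hκ : 0 < κ) (u : ℝ) (hu : 0 < u) (n : ℕ) (x : ℝ)
    (hden : ∀ a : ℝ, a ≠ 0 → a ≠ 1 →
      meixner κ a⁻¹ (2 - ((κ : ℝ) + 1 + (1 - a) ^ κ / u)) (-(n : ℝ)) ≠ 0) :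
    Tendsto
      (fun a : ℝ =>
        (a - 1) ^ n * krallMeixner n a ((κ : ℝ) + 1 + (1 - a) ^ κ / u) κ (x / (1 - a)))
      (𝓝[({0, 1} : Set ℝ)ᶜ] (1 : ℝ)) (𝓝 (krallLaguerre n κ u x)) := by
  have h1 := meixner_scaled_tendsto κ hκ u hu.ne' n x
  rcases Nat.eq_zero_or_pos n with hn | hn
  · subst hn
    have hval : krallLaguerre 0 κ u x = laguerre 0 κ x := by
      unfold krallLaguerre; simp
    rw [hval]
    refine Tendsto.congr' ?_ h1
    filter_upwards with a
    unfold krallMeixner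
    simp
  · have hn' : n ≠ 0 := hn.ne'
    have h2 := meixner_scaled_tendsto κ hκ u hu.ne' (n - 1) x
    have h3 := (ratio_tendsto κ hκ u hu n).mono_left
      (nhdsWithin_le_nhds : 𝓝[({0, 1} : Set ℝ)ᶜ] (1 : ℝ) ≤ 𝓝 1)
    have hT := h1.add (h2.mul h3)
    have hval : laguerre n κ x + laguerre (n - 1) κ x *
        -(((Nat.factorial (κ - 1) : ℝ) + u * poch ((n : ℝ) + 1) κ) /
          ((Nat.factorial (κ - 1) : ℝ) + u * poch (n : ℝ) κ)) = krallLaguerre n κ u x := by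
      unfold krallLaguerre
      rw [if_neg hn']
      ring
    rw [← hval]
    refine Tendsto.congr' ?_ hT
    filter_upwards [self_mem_nhdsWithin] with a ha
    have ha0 : a ≠ 0 := fun h => ha (by simp [h])
    have ha1 : a ≠ 1 := fun h => ha (by simp [h])
    have h1a : (1 : ℝ) - a ≠ 0 := sub_ne_zero.2 (Ne.symm ha1)
    unfold krallMeixner
    rw [if_neg hn']
    rw [meixner_inv_eq κ u (-(n : ℝ) - 1) a ha0 ha1, meixner_inv_eq κ u (-(n : ℝ)) a ha0 ha1]
    set Mn := meixner n a ((κ : ℝ) + 1 + (1 - a) ^ κ / u) (x / (1 - a)) with hMn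
    set Mp := meixner (n - 1) a ((κ : ℝ) + 1 + (1 - a) ^ κ / u) (x / (1 - a)) with hMp
    set N := Dtil κ u (-(n : ℝ) - 1) a with hN
    set D := Dtil κ u (-(n : ℝ)) a with hD
    have hp : (a - 1) ^ n = (a - 1) ^ (n - 1) * (a - 1) := by
      rw [← pow_succ]; congr 1; omega
    have hDne : D ≠ 0 := by
      rw [hD, ← meixner_inv_eq κ u (-(n : ℝ)) a ha0 ha1]
      exact hden a ha0 ha1
    have hdiv : (a - 1) * (a * N / ((1 - a) * D)) = -(a * N / D) := by
      field_simp
      ring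
    rw [hp]
    linear_combination (-((a - 1) ^ (n - 1) * Mp)) * hdiv
end

section
/- The dual Hahn polynomial R_n^{a,b,N} evaluated at θ_x^{a+b} = x(x+a+b+1) equals (-N)_n (a+1)_n · ₃F₂(-n, -x, x+a+b+1; a+1, -N; 1), i.e. R_n^{a,b,N}(θ_x^{a+b}) = Σ_{k=0}^n ((-n)_k (-x)_k (x+a+b+1)_k)/((a+1)_k (-N)_k k!) · (-N)_n (a+1)_n, provided a+1 and -N avoid the zeros making the terms undefined. -/
open Filter Topology Finset

/-- λ_j^u(y) = ∏_{i=0}^{j-1} (y - i(u+i+1)). -/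
noncomputable def lam (j : ℕ) (u y : ℝ) : ℝ :=
  ∏ i ∈ Finset.range j, (y - i * (u + i + 1))

/-- θ_x^u = x(x+u+1). -/
noncomputable def theta (x u : ℝ) : ℝ := x * (x + u + 1)

/-- Dual Hahn polynomial R_n^{a,b,N}(x). -/
noncomputable def dualHahn (n : ℕ) (a b N x : ℝ) : ℝ :=
  ∑ j ∈ Finset.range (n + 1),
    (poch (-(n : ℝ)) j * poch (-N + j) (n - j) * poch (a + j + 1) (n - j) /
      ((-1) ^ j * (Nat.factorial j))) * lam j (a + b) x


lemma poch_add' (y : ℝ) (j m : ℕ) : poch y (j + m) = poch y j * poch (y + j) m := by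
  unfold poch
  rw [Finset.prod_range_add]
  congr 1
  apply Finset.prod_congr rfl
  intro i _
  push_cast
  ring

lemma lam_theta (j : ℕ) (u x : ℝ) :
    lam j u (theta x u) = (-1) ^ j * (poch (-x) j * poch (x + u + 1) j) := by
  induction j with
  | zero => simp [lam, poch]
  | succ j ih =>
    simp only [lam, poch, theta, Finset.prod_range_succ] at *
    rw [ih]
    ring

theorem stmt13 (n : ℕ) (a b N x : ℝ)
    (ha : ∀ k : ℕ, k < n → a + 1 + k ≠ 0) (hN : ∀ k : ℕ, k < n → -N + k ≠ 0) :
    dualHahn n a b N (theta x (a + b)) =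
      (∑ k ∈ Finset.range (n + 1),
          poch (-(n : ℝ)) k * poch (-x) k * poch (x + a + b + 1) k /
            (poch (a + 1) k * poch (-N) k * (Nat.factorial k))) *
        (poch (-N) n * poch (a + 1) n) := by
  rw [Finset.sum_mul]
  unfold dualHahn
  apply Finset.sum_congr rfl
  intro j hj
  rw [Finset.mem_range, Nat.lt_succ_iff] at hj
  have hsN : poch (-N) n = poch (-N) j * poch (-N + j) (n - j) := by
    conv_lhs => rw [← Nat.add_sub_cancel' hj]
    exact poch_add' _ _ _
  have hsA : poch (a + 1) n = poch (a + 1) j * poch (a + j + 1) (n - j) := by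
    conv_lhs => rw [← Nat.add_sub_cancel' hj]
    rw [poch_add' _ _ _]
    congr 2
    ring
  have h1 : poch (a + 1) j ≠ 0 := by
    unfold poch
    rw [Finset.prod_ne_zero_iff]
    intro i hi
    exact ha i (lt_of_lt_of_le (Finset.mem_range.mp hi) hj)
  have h2 : poch (-N) j ≠ 0 := by
    unfold poch
    rw [Finset.prod_ne_zero_iff]
    intro i hi
    exact hN i (lt_of_lt_of_le (Finset.mem_range.mp hi) hj)
  have h3 : (Nat.factorial j : ℝ) ≠ 0 := Nat.cast_ne_zero.mpr (Nat.factorial_ne_zero j)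
  have h4 : ((-1 : ℝ)) ^ j ≠ 0 := pow_ne_zero _ (by norm_num)
  have e : x + (a + b) + 1 = x + a + b + 1 := by ring
  rw [lam_theta, e, hsN, hsA]
  field_simp
end

section
/- Let κ be a positive integer and a, b real with b ∉ {1,...,κ}. Then for every real z, lim_{N→∞} R_κ^{-b,-a,a+b+N}(z)/N^κ = (b-κ)_κ, where the limit is over real N → ∞ and (y)_κ is the Pochhammer symbol. -/
open Filter Topology Finset

theorem stmt14 (κ : ℕ) (hκ : 0 < κ) (a b : ℝ)
    (hb : ∀ j : ℕ, 1 ≤ j → j ≤ κ → b ≠ (j : ℝ)) (z : ℝ) :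
    Tendsto (fun N : ℝ => dualHahn κ (-b) (-a) (a + b + N) z / N ^ κ) atTop
      (𝓝 (poch (b - κ) κ)) := by
  set A : ℕ → ℝ := fun j =>
    poch (-(κ : ℝ)) j * poch (-b + j + 1) (κ - j) /
      ((-1) ^ j * (Nat.factorial j)) * lam j (-b + -a) z with hA
  set G : ℕ → ℝ → ℝ := fun j t =>
    A j * ((∏ i ∈ Finset.range (κ - j), ((j + i - a - b) * t - 1)) * t ^ j) with hG
  -- step 1: eventual equality
  have heq : (fun N : ℝ => dualHahn κ (-b) (-a) (a + b + N) z / N ^ κ)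
      =ᶠ[atTop] fun N : ℝ => ∑ j ∈ Finset.range (κ + 1), G j N⁻¹ := by
    filter_upwards [eventually_gt_atTop (0 : ℝ)] with N hN
    have hN0 : N ≠ 0 := ne_of_gt hN
    rw [dualHahn, Finset.sum_div]
    refine Finset.sum_congr rfl fun j hj => ?_
    have hjκ : j ≤ κ := Nat.lt_succ_iff.mp (Finset.mem_range.mp hj)
    have hpoch : poch (-(a + b + N) + j) (κ - j)
        = N ^ (κ - j) * ∏ i ∈ Finset.range (κ - j), ((j + i - a - b) * N⁻¹ - 1) := by
      rw [poch]
      calc ∏ i ∈ Finset.range (κ - j), (-(a + b + N) + (j : ℝ) + i)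
          = ∏ i ∈ Finset.range (κ - j), N * (((j : ℝ) + i - a - b) * N⁻¹ - 1) :=
            Finset.prod_congr rfl (fun i _ => by field_simp; ring)
        _ = N ^ (κ - j) * ∏ i ∈ Finset.range (κ - j), (((j : ℝ) + i - a - b) * N⁻¹ - 1) := by
            rw [Finset.prod_mul_distrib, Finset.prod_const, Finset.card_range]
    rw [hpoch, hG, hA]
    have hpow : N ^ κ = N ^ (κ - j) * N ^ j := by
      rw [← pow_add]; congr 1; omega
    have hfact : ((Nat.factorial j : ℝ)) ≠ 0 := Nat.cast_ne_zero.mpr (Nat.factorial_ne_zero j)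
    have hneg : ((-1 : ℝ)) ^ j ≠ 0 := by positivity
    rw [hpow]
    beta_reduce
    rw [inv_pow]
    generalize (∏ i ∈ Finset.range (κ - j), (((j : ℝ) + i - a - b) * N⁻¹ - 1)) = P
    field_simp
  -- step 2: each summand tends to G j 0
  have hlim : Tendsto (fun N : ℝ => ∑ j ∈ Finset.range (κ + 1), G j N⁻¹) atTop
      (𝓝 (∑ j ∈ Finset.range (κ + 1), G j 0)) := by
    refine tendsto_finset_sum _ fun j _ => ?_
    have hc : Continuous (G j) := by
      apply Continuous.mul continuous_const
      exact (continuous_finset_prod _ fun i _ =>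
        ((continuous_const.mul continuous_id).sub continuous_const)).mul (continuous_pow j)
    exact (hc.tendsto 0).comp tendsto_inv_atTop_zero
  -- step 3: compute the limit value
  have key : poch (-b + 1) κ * (-1 : ℝ) ^ κ = poch (b - κ) κ := by
    rw [poch, poch, ← Finset.prod_range_reflect (fun i => (b - (κ : ℝ)) + i) κ]
    have hc : ∀ i ∈ Finset.range κ,
        (b - (κ : ℝ)) + ((κ - 1 - i : ℕ) : ℝ) = (-1) * (-b + 1 + i) := by
      intro i hi
      have hi' := Finset.mem_range.mp hi
      have h1 : (κ - 1 - i : ℕ) = κ - (i + 1) := by omega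
      have h2 : i + 1 ≤ κ := hi'
      rw [h1, Nat.cast_sub h2]
      push_cast
      ring
    rw [Finset.prod_congr rfl hc, Finset.prod_mul_distrib, Finset.prod_const,
      Finset.card_range]
    ring
  have hval : (∑ j ∈ Finset.range (κ + 1), G j 0) = poch (b - κ) κ := by
    rw [Finset.sum_eq_single 0]
    · have hG0 : G 0 0 = poch (-b + 1) κ * (-1 : ℝ) ^ κ := by
        simp [hG, hA, poch, lam]
      rw [hG0, key]
    · intro j hj hj0
      simp [hG, zero_pow hj0]
    · intro h; exact absurd (Finset.mem_range.mpr (Nat.succ_pos κ)) h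
  rw [← hval]
  exact hlim.congr' heq.symm
end

section
/- Let κ be a positive integer, a real, and b an integer with 1 ≤ b ≤ κ. Then for every real z, lim_{N→∞} R_κ^{-b,-a,a+b+N}(z)/N^{κ-b} = ((b+1)_{κ-b}/(-1)^{b+κ}) · λ_b^{-b-a}(z). -/
open Filter Topology Finset

lemma poch_succ (y : ℝ) (k : ℕ) : poch y (k+1) = poch y k * (y + k) := by
  simp [poch, Finset.prod_range_succ]

lemma poch_one (k : ℕ) : poch 1 k = Nat.factorial k := by
  induction k with
  | zero => simp [poch]
  | succ n ih => rw [poch_succ, ih]; push_cast [Nat.factorial_succ]; ring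

lemma poch_nat_mul (m k : ℕ) :
    (Nat.factorial m : ℝ) * poch ((m:ℝ)+1) k = Nat.factorial (m+k) := by
  induction k with
  | zero => simp [poch]
  | succ n ih =>
    rw [poch_succ, ← mul_assoc, ih]
    rw [show m + (n+1) = (m+n)+1 by omega]
    push_cast [Nat.factorial_succ]; ring

lemma poch_neg_nat (n : ℕ) : ∀ k : ℕ, k ≤ n →
    poch (-(n:ℝ)) k * (Nat.factorial (n-k)) = (-1)^k * Nat.factorial n := by
  intro k
  induction k with
  | zero => simp [poch]
  | succ m ih =>
    intro h
    have hm : m ≤ n := by omega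
    have ihm := ih hm
    have hc : ((n - (m+1) : ℕ) : ℝ) + 1 = (n:ℝ) - m := by
      have : ((n - (m+1) : ℕ):ℝ) = (n:ℝ) - ((m:ℝ)+1) := by
        push_cast [Nat.cast_sub h]; ring
      rw [this]; ring
    have h2 : (Nat.factorial (n-m) : ℝ) = ((n:ℝ) - m) * Nat.factorial (n - (m+1)) := by
      rw [show n - m = (n - (m+1)) + 1 by omega]
      push_cast [Nat.factorial_succ]
      rw [hc]
    rw [h2] at ihm
    rw [poch_succ]
    have hne : (n:ℝ) - m ≠ 0 := by
      have : (m:ℝ) < n := by exact_mod_cast (by omega : m < n)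
      linarith
    apply mul_right_cancel₀ hne
    linear_combination (-(n:ℝ) + m) * ihm

lemma aux_tendsto (c : ℝ) (k m : ℕ) (hkm : k ≤ m) :
    Tendsto (fun N : ℝ => (∏ i ∈ Finset.range k, (c - N + i)) / N ^ m) atTop
      (𝓝 (if k = m then ((-1:ℝ))^k else 0)) := by
  have hcongr : ∀ᶠ N : ℝ in atTop,
      (∏ i ∈ Finset.range k, ((c + i)/N - 1)) * (1/N)^(m-k)
        = (∏ i ∈ Finset.range k, (c - N + i)) / N ^ m := by
    filter_upwards [eventually_gt_atTop 0] with N hN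
    have hN' : N ≠ 0 := ne_of_gt hN
    have h1 : ∀ i ∈ Finset.range k, (c + (i:ℝ))/N - 1 = (c - N + i)/N := by
      intro i _; field_simp; ring
    rw [Finset.prod_congr rfl h1, Finset.prod_div_distrib, Finset.prod_const]
    rw [div_pow, one_pow, div_mul_div_comm, mul_one, Finset.card_range, ← pow_add,
      Nat.add_sub_cancel' hkm]
  apply Tendsto.congr' hcongr
  have hprod : Tendsto (fun N : ℝ => ∏ i ∈ Finset.range k, ((c + i)/N - 1)) atTop
      (𝓝 ((-1:ℝ)^k)) := by
    have := tendsto_finset_prod (Finset.range k)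
      (f := fun (i : ℕ) (N : ℝ) => (c + i)/N - 1) (a := fun _ => (-1:ℝ))
      (fun i _ => by
        have h0 : Tendsto (fun N : ℝ => (c + i)/N) atTop (𝓝 0) :=
          tendsto_const_nhds.div_atTop tendsto_id
        simpa using h0.sub_const 1)
    simpa using this
  rcases eq_or_lt_of_le hkm with h | h
  · subst h
    simpa [Nat.sub_self] using hprod
  · rw [if_neg (by omega)]
    have hinv : Tendsto (fun N : ℝ => 1/N) atTop (𝓝 0) := by
      simpa using tendsto_inv_atTop_zero
    have h2 : Tendsto (fun N : ℝ => (1/N)^(m-k)) atTop (𝓝 ((0:ℝ)^(m-k))) :=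
      hinv.pow (m-k)
    have h3 : ((0:ℝ)^(m-k)) = 0 := by
      apply zero_pow; omega
    rw [h3] at h2
    simpa using hprod.mul h2

theorem stmt15 (κ : ℕ) (hκ : 0 < κ) (a : ℝ) (b : ℕ) (hb1 : 1 ≤ b) (hbκ : b ≤ κ) (z : ℝ) :
    Tendsto (fun N : ℝ => dualHahn κ (-(b : ℝ)) (-a) (a + b + N) z / N ^ (κ - b)) atTop
      (𝓝 ((poch ((b : ℝ) + 1) (κ - b) / (-1) ^ (b + κ)) * lam b (-(b : ℝ) - a) z)) := by
  set RHS : ℝ := (poch ((b : ℝ) + 1) (κ - b) / (-1) ^ (b + κ)) * lam b (-(b : ℝ) - a) z with hRHS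
  have hsum : (fun N : ℝ => dualHahn κ (-(b : ℝ)) (-a) (a + b + N) z / N ^ (κ - b))
      = fun N : ℝ => ∑ j ∈ Finset.range (κ+1),
        (poch (-(κ:ℝ)) j * poch (-(a + ↑b + N) + ↑j) (κ - j) * poch (-(b:ℝ) + ↑j + 1) (κ - j) /
          ((-1)^j * (Nat.factorial j)) * lam j (-(b:ℝ) + -a) z) / N ^ (κ - b) := by
    funext N
    rw [dualHahn, Finset.sum_div]
  rw [hsum]
  have hmem : b ∈ Finset.range (κ+1) := by simp; omega
  have key : RHS = ∑ j ∈ Finset.range (κ+1), (if j = b then RHS else 0) := by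
    rw [Finset.sum_ite_eq' (Finset.range (κ+1)) b, if_pos hmem]
  rw [key]
  apply tendsto_finset_sum
  intro j hj
  have hjκ : j ≤ κ := by simp at hj; omega
  by_cases hjb : j < b
  · -- term is identically zero
    rw [if_neg (by omega : j ≠ b)]
    have hz : poch (-(b:ℝ) + ↑j + 1) (κ - j) = 0 := by
      apply Finset.prod_eq_zero (show b - j - 1 ∈ Finset.range (κ - j) by
        simp; omega)
      have hcast : ((b - j - 1 : ℕ):ℝ) = (b:ℝ) - (j:ℝ) - 1 := by
        rw [show b - j - 1 = b - (j+1) by omega, Nat.cast_sub (by omega)]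
        push_cast; ring
      rw [hcast]; ring
    simp only [hz, mul_zero, zero_mul, zero_div, mul_div_assoc]
    simpa using tendsto_const_nhds (α := ℝ) (f := atTop) (a := (0:ℝ))
  · push_neg at hjb
    set K : ℝ := poch (-(κ:ℝ)) j * poch (-(b:ℝ) + ↑j + 1) (κ - j) /
        ((-1)^j * (Nat.factorial j)) * lam j (-(b:ℝ) + -a) z with hK
    have hcongr : ∀ N : ℝ,
        K * ((∏ i ∈ Finset.range (κ - j), ((↑j - a - ↑b) - N + ↑i)) / N ^ (κ - b))
        = (poch (-(κ:ℝ)) j * poch (-(a + ↑b + N) + ↑j) (κ - j) * poch (-(b:ℝ) + ↑j + 1) (κ - j) /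
          ((-1)^j * (Nat.factorial j)) * lam j (-(b:ℝ) + -a) z) / N ^ (κ - b) := by
      intro N
      have hp : poch (-(a + ↑b + N) + ↑j) (κ - j)
          = ∏ i ∈ Finset.range (κ - j), ((↑j - a - ↑b) - N + ↑i) := by
        unfold poch
        apply Finset.prod_congr rfl
        intro i _; ring
      rw [hp, hK]; ring
    have htend := (aux_tendsto ((j:ℝ) - a - b) (κ - j) (κ - b) (by omega)).const_mul K
    have := htend.congr hcongr
    by_cases hj2 : j = b
    · subst hj2
      rw [if_pos rfl]
      convert this using 2
      rw [if_pos rfl, hK, hRHS]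
      -- algebraic identity
      have e1 : poch (-(j:ℝ) + ↑j + 1) (κ - j) = ((κ-j).factorial : ℝ) := by
        rw [show -(j:ℝ) + ↑j + 1 = 1 by ring, poch_one]
      have e2 : lam j (-(j:ℝ) + -a) z = lam j (-(j:ℝ) - a) z := by
        rw [show -(j:ℝ) + -a = -(j:ℝ) - a by ring]
      have e3 := poch_neg_nat κ j hbκ
      have e4 : (j.factorial:ℝ) * poch ((j:ℝ)+1) (κ - j) = (κ.factorial:ℝ) := by
        have h := poch_nat_mul j (κ - j)
        rw [show j + (κ - j) = κ by omega] at h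
        exact h
      have hs : (-1:ℝ)^(κ-j) * (-1)^j = (-1)^κ := by
        rw [← pow_add]; congr 1; omega
      have hs2 : (-1:ℝ)^(j+κ) = (-1)^j * (-1)^κ := pow_add (-1) j κ
      rw [e1, e2, hs2]
      have hfj : (j.factorial : ℝ) ≠ 0 := Nat.cast_ne_zero.2 (Nat.factorial_ne_zero j)
      have hfkj : ((κ-j).factorial : ℝ) ≠ 0 := Nat.cast_ne_zero.2 (Nat.factorial_ne_zero _)
      have hsj : ((-1:ℝ)^j) ≠ 0 := by positivity
      have hsκ : ((-1:ℝ)^κ) ≠ 0 := by positivity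
      have hss : (-1:ℝ)^j * (-1)^j = 1 := by
        rw [← pow_add]; exact Even.neg_one_pow ⟨j, rfl⟩
      have huu : (-1:ℝ)^(κ-j) * (-1)^(κ-j) = 1 := by
        rw [← pow_add]; exact Even.neg_one_pow ⟨κ-j, rfl⟩
      set L : ℝ := lam j (-(j:ℝ) - a) z with hL
      set s : ℝ := (-1:ℝ)^j with hs'
      set t : ℝ := (-1:ℝ)^κ with ht'
      set u : ℝ := (-1:ℝ)^(κ-j) with hu'
      field_simp
      linear_combination L * e4 - (t * L * u) * e3
        - (L * (κ.factorial : ℝ) * s * s) * huu - (L * (κ.factorial : ℝ)) * hss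
        + (L * (κ.factorial : ℝ) * u * s) * hs
    · rw [if_neg hj2]
      rw [if_neg (by omega : ¬ (κ - j = κ - b))] at this
      simpa using this
end
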